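/- Let 0 → A → B → C → 0 be a short exact sequence of I-modules (I a group) such that A is an induced (coinduced from the trivial subgroup over a finite index subgroup, i.e. of the form ℤ[I/J]-free) I-module with A_I torsion-free. Then the map on coinvariants A_I → B_I is injective and B_I/A_I ≅ C_I. -/

import Mathlib

/-- The subgroup of an `I`-module `M` generated by the elements `m - g • m`;
the coinvariants `M_I` are the quotient `M ⧸ coinvSub I M`. -/
def HR.coinvSub (I M : Type*) [Group I] [AddCommGroup M] [DistribMulAction I M] :
    AddSubgroup M :=
  AddSubgroup.closure {x | ∃ (g : I) (m : M), x = m - g • m}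

/-- Let `0 → A → B → C → 0` be a short exact sequence of
`I`-modules (finitely generated free abelian groups, `I` finite) such that `A`
is an induced module `ℤ[I/J]`, i.e. the permutation module on a transitive
`I`-set `X` (here realized by an equivariant isomorphism `A ≃ (X →₀ ℤ)`).
Then `A_I → B_I` is injective and `B_I / A_I ≅ C_I`. -/
theorem statement5 {I A B C : Type*} [Group I] [Finite I]
    [AddCommGroup A] [AddCommGroup B] [AddCommGroup C]
    [AddGroup.FG A] [AddGroup.FG B] [AddGroup.FG C]
    [NoZeroSMulDivisors ℤ A] [NoZeroSMulDivisors ℤ B] [NoZeroSMulDivisors ℤ C]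
    [DistribMulAction I A] [DistribMulAction I B] [DistribMulAction I C]
    (ι : A →+ B) (π : B →+ C)
    (hι : ∀ (g : I) (a : A), ι (g • a) = g • ι a)
    (hπ : ∀ (g : I) (b : B), π (g • b) = g • π b)
    (hinj : Function.Injective ι) (hsurj : Function.Surjective π)
    (hexact : ∀ b : B, π b = 0 ↔ b ∈ ι.range)
    -- `A` is the permutation module `ℤ[X]` on a transitive `I`-set `X`
    (X : Type*) [Fintype X] [MulAction I X] [MulAction.IsPretransitive I X]
    (b : A ≃+ (X →₀ ℤ))
    (hb : ∀ (g : I) (a : A) (x : X), b (g • a) x = b a (g⁻¹ • x)) :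
    (∀ a : A, ι a ∈ HR.coinvSub I B → a ∈ HR.coinvSub I A) ∧
    ∃ e : (B ⧸ (HR.coinvSub I B ⊔ ι.range)) ≃+ (C ⧸ HR.coinvSub I C),
      ∀ b : B, e (QuotientAddGroup.mk b) = QuotientAddGroup.mk (π b) := by
  classical
  have _inst : Fintype I := Fintype.ofFinite I
  -- sum-of-coefficients homomorphism on A
  let σA : A →+ ℤ := AddMonoidHom.mk' (fun a => ∑ x : X, b a x)
    (fun a a' => by simp [Finset.sum_add_distrib])
  have hσA : ∀ a : A, σA a = ∑ x : X, b a x := fun a => rfl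
  have hσsmul : ∀ (g : I) (a : A), σA (g • a) = σA a := by
    intro g a
    simp only [hσA, hb]
    exact Equiv.sum_comp (MulAction.toPerm g⁻¹) (fun x => b a x)
  have hcoinvA : HR.coinvSub I A ≤ σA.ker := by
    rw [HR.coinvSub]
    refine (AddSubgroup.closure_le _).2 ?_
    rintro _ ⟨g, m, rfl⟩
    simp [AddMonoidHom.mem_ker, hσsmul]
  -- norm homomorphism on B
  let NB : B →+ B := AddMonoidHom.mk' (fun x => ∑ g : I, g • x)
    (fun x y => by simp [smul_add, Finset.sum_add_distrib])
  have hNB : HR.coinvSub I B ≤ NB.ker := by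
    rw [HR.coinvSub]
    refine (AddSubgroup.closure_le _).2 ?_
    rintro _ ⟨g, m, rfl⟩
    have hsm : ∀ h : I, h • (m - g • m) = h • m - (h * g) • m := by
      intro h; rw [smul_sub, smul_smul]
    simp only [SetLike.mem_coe, AddMonoidHom.mem_ker]
    show ∑ h : I, h • (m - g • m) = 0
    simp only [hsm]
    have hre : ∑ h : I, (h * g) • m = ∑ h : I, h • m :=
      Fintype.sum_bijective (· * g) (Group.mulRight_bijective g) _ _ (fun h => rfl)
    rw [Finset.sum_sub_distrib, hre, sub_self]
  -- σA a = 0 → a ∈ coinvSub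
  have hker : ∀ a : A, σA a = 0 → a ∈ HR.coinvSub I A := by
    rcases isEmpty_or_nonempty X with hX | hne
    · intro a _
      have hz : b a = 0 := by ext x; exact (hX.false x).elim
      have : a = 0 := by
        apply b.injective; simpa using hz
      rw [this]; exact zero_mem _
    obtain ⟨x₀⟩ := hne
    set e₀ : A := b.symm (Finsupp.single x₀ 1) with he₀
    have hsingle : ∀ x : X, (QuotientAddGroup.mk (b.symm (Finsupp.single x 1)) :
        A ⧸ HR.coinvSub I A) = QuotientAddGroup.mk e₀ := by
      intro x
      obtain ⟨g, hg⟩ := MulAction.exists_smul_eq I x₀ x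
      have hbg : b (g • e₀) = Finsupp.single x 1 := by
        ext y
        rw [hb, he₀, b.apply_symm_apply, ← hg]
        simp [Finsupp.single_apply, eq_inv_smul_iff]
      have hge : b.symm (Finsupp.single x 1) = g • e₀ := by
        apply b.injective; rw [b.apply_symm_apply, hbg]
      rw [hge]
      refine QuotientAddGroup.eq_iff_sub_mem.2 ?_
      have hmem : e₀ - g • e₀ ∈ HR.coinvSub I A :=
        AddSubgroup.subset_closure ⟨g, e₀, rfl⟩
      have := neg_mem hmem
      simpa using this
    have hmk : ∀ f : X →₀ ℤ, (QuotientAddGroup.mk (b.symm f) : A ⧸ HR.coinvSub I A)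
        = (∑ x : X, f x) • QuotientAddGroup.mk e₀ := by
      intro f
      induction f using Finsupp.induction_linear with
      | zero => simp
      | add f₁ f₂ h₁ h₂ =>
        rw [map_add]
        have : (QuotientAddGroup.mk (b.symm f₁ + b.symm f₂) : A ⧸ HR.coinvSub I A)
            = QuotientAddGroup.mk (b.symm f₁) + QuotientAddGroup.mk (b.symm f₂) := rfl
        rw [this, h₁, h₂, ← add_smul]
        congr 1
        rw [← Finset.sum_add_distrib]
        rfl
      | single x r =>
        have h1 : (Finsupp.single x r : X →₀ ℤ) = r • Finsupp.single x 1 := by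
          rw [Finsupp.smul_single, smul_eq_mul, mul_one]
        have h2 : (QuotientAddGroup.mk (r • b.symm (Finsupp.single x 1)) :
            A ⧸ HR.coinvSub I A) = r • QuotientAddGroup.mk (b.symm (Finsupp.single x 1)) := rfl
        rw [h1, map_zsmul, h2, hsingle x]
        congr 1
        simp [Finsupp.single_apply]
    intro a ha
    have h := hmk (b a)
    rw [b.symm_apply_apply, ← hσA, ha, zero_smul] at h
    exact (QuotientAddGroup.eq_zero_iff a).1 h
  constructor
  · -- Part 1
    intro a ha
    have h0 : NB (ι a) = 0 := hNB ha
    have h1 : NB (ι a) = ι (∑ g : I, g • a) := by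
      show ∑ g : I, g • ι a = _
      rw [map_sum]
      exact Finset.sum_congr rfl fun g _ => (hι g a).symm
    have h2 : ∑ g : I, g • a = 0 := hinj (by rw [← h1, h0, map_zero])
    have h3 : σA (∑ g : I, g • a) = (Fintype.card I : ℤ) * σA a := by
      rw [map_sum]
      simp [hσsmul, Finset.sum_const, nsmul_eq_mul]
    rw [h2, map_zero] at h3
    have hcard : (Fintype.card I : ℤ) ≠ 0 := by
      exact_mod_cast Fintype.card_ne_zero
    exact hker a ((mul_eq_zero.1 h3.symm).resolve_left hcard)
  · -- Part 2
    set S : AddSubgroup B := HR.coinvSub I B ⊔ ι.range with hS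
    set qC := QuotientAddGroup.mk' (HR.coinvSub I C) with hqC
    have hD : S ≤ (qC.comp π).ker := by
      rw [hS, sup_le_iff]
      constructor
      · rw [HR.coinvSub]
        refine (AddSubgroup.closure_le _).2 ?_
        rintro _ ⟨g, m, rfl⟩
        simp only [SetLike.mem_coe, AddMonoidHom.mem_ker, AddMonoidHom.comp_apply,
          map_sub, hπ, QuotientAddGroup.mk'_apply]
        show (QuotientAddGroup.mk (π m - g • π m) : C ⧸ HR.coinvSub I C) = 0
        exact (QuotientAddGroup.eq_zero_iff _).2
          (AddSubgroup.subset_closure ⟨g, π m, rfl⟩)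
      · rintro _ ⟨a, rfl⟩
        simp only [AddMonoidHom.mem_ker, AddMonoidHom.comp_apply]
        rw [(hexact (ι a)).2 ⟨a, rfl⟩, map_zero]
    set ψ := QuotientAddGroup.lift S (qC.comp π) hD with hψ
    have hmapC : HR.coinvSub I C ≤ (HR.coinvSub I B).map π := by
      simp only [HR.coinvSub]
      refine (AddSubgroup.closure_le _).2 ?_
      rintro _ ⟨g, c, rfl⟩
      obtain ⟨m, rfl⟩ := hsurj c
      exact AddSubgroup.mem_map.2
        ⟨m - g • m, AddSubgroup.subset_closure ⟨g, m, rfl⟩, by rw [map_sub, hπ]⟩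
    have hψmk : ∀ b₀ : B, ψ (QuotientAddGroup.mk b₀) = QuotientAddGroup.mk (π b₀) := by
      intro b₀; rfl
    have hinjψ : Function.Injective ψ := by
      rw [injective_iff_map_eq_zero]
      intro q hq
      obtain ⟨b₀, rfl⟩ := QuotientAddGroup.mk_surjective q
      rw [hψmk] at hq
      have hq' : π b₀ ∈ HR.coinvSub I C := (QuotientAddGroup.eq_zero_iff _).1 hq
      obtain ⟨b', hb', hπb'⟩ := AddSubgroup.mem_map.1 (hmapC hq')
      have hr : b₀ - b' ∈ ι.range := (hexact _).1 (by rw [map_sub, hπb', sub_self])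
      have hmem : b₀ ∈ S := by
        have hrw : b₀ = b' + (b₀ - b') := by abel
        rw [hrw]
        exact add_mem (AddSubgroup.mem_sup_left hb') (AddSubgroup.mem_sup_right hr)
      exact (QuotientAddGroup.eq_zero_iff _).2 hmem
    have hsurjψ : Function.Surjective ψ := by
      intro q
      obtain ⟨c, rfl⟩ := QuotientAddGroup.mk_surjective q
      obtain ⟨b₀, rfl⟩ := hsurj c
      exact ⟨QuotientAddGroup.mk b₀, hψmk b₀⟩
    exact ⟨AddEquiv.ofBijective ψ ⟨hinjψ, hsurjψ⟩, hψmk⟩
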